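/- Let E and F be standard Borel spaces, let κ be a Markov kernel from E to F, and let T : F → E be a measurable map such that κ(x)({y ∈ F : T(y) = x}) = 1 for every x ∈ E. Then for all probability measures α and β on E, H(α∘κ | β∘κ) = H(α|β), where α∘κ denotes the probability measure A ↦ ∫ κ(x)(A) dα(x) on F. -/

import Mathlib

open MeasureTheory ProbabilityTheory

open Classical in
noncomputable def relEntropy {E : Type*} [MeasurableSpace E] (μ ν : Measure E) : EReal :=
  if μ ≪ ν ∧ Integrable (llr μ ν) μ then ((∫ x, llr μ ν x ∂μ : ℝ) : EReal) else ⊤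

section aux

variable {E F : Type*} [MeasurableSpace E] [MeasurableSpace F] [MeasurableSingletonClass E]

lemma kernel_apply_preimage (κ : Kernel E F) [IsMarkovKernel κ]
    (T : F → E) (hT : Measurable T) (hκT : ∀ x : E, κ x {y : F | T y = x} = 1)
    (x : E) {A : Set E} (hA : MeasurableSet A) :
    κ x (T ⁻¹' A) = A.indicator 1 x := by
  have hms : MeasurableSet {y : F | T y = x} := hT (measurableSet_singleton x)
  have hnull : κ x {y : F | T y = x}ᶜ = 0 :=
    (prob_compl_eq_zero_iff hms).2 (hκT x)
  rw [← measure_inter_conull hnull]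
  by_cases hx : x ∈ A
  · have h1 : T ⁻¹' A ∩ {y : F | T y = x} = {y : F | T y = x} := by
      ext y; simp only [Set.mem_inter_iff, Set.mem_preimage, Set.mem_setOf_eq]
      exact ⟨fun h => h.2, fun h => ⟨h ▸ hx, h⟩⟩
    simp [h1, hκT x, Set.indicator_of_mem hx]
  · have h1 : T ⁻¹' A ∩ {y : F | T y = x} = ∅ := by
      ext y; simp only [Set.mem_inter_iff, Set.mem_preimage, Set.mem_setOf_eq,
        Set.mem_empty_iff_false, iff_false]
      rintro ⟨ha, he⟩; exact hx (he ▸ ha)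
    simp [h1, Set.indicator_of_notMem hx]

lemma map_bind_eq (κ : Kernel E F) [IsMarkovKernel κ]
    (T : F → E) (hT : Measurable T) (hκT : ∀ x : E, κ x {y : F | T y = x} = 1)
    (α : Measure E) [IsProbabilityMeasure α] :
    (α.bind fun x => κ x).map T = α := by
  ext A hA
  rw [Measure.map_apply hT hA, Measure.bind_apply (hT hA) κ.measurable.aemeasurable]
  calc ∫⁻ x, κ x (T ⁻¹' A) ∂α = ∫⁻ x, A.indicator 1 x ∂α := by
        exact lintegral_congr fun x => kernel_apply_preimage κ T hT hκT x hA
    _ = α A := by rw [lintegral_indicator_one hA]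

lemma bind_eq_withDensity (κ : Kernel E F) [IsMarkovKernel κ]
    (T : F → E) (hT : Measurable T) (hκT : ∀ x : E, κ x {y : F | T y = x} = 1)
    (α β : Measure E) [IsProbabilityMeasure α] [IsProbabilityMeasure β] (hab : α ≪ β) :
    α.bind (fun x => κ x) = (β.bind fun x => κ x).withDensity (fun y => α.rnDeriv β (T y)) := by
  set f : E → ENNReal := α.rnDeriv β with hf_def
  have hf : Measurable f := Measure.measurable_rnDeriv α β
  have hαd : α = β.withDensity f := (Measure.withDensity_rnDeriv_eq α β hab).symm
  ext A hA
  have key : ∀ x : E, ∫⁻ y, A.indicator (fun y => f (T y)) y ∂κ x = f x * κ x A := by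
    intro x
    have hms : MeasurableSet {y : F | T y = x} := hT (measurableSet_singleton x)
    have hnull : κ x {y : F | T y = x}ᶜ = 0 :=
      (prob_compl_eq_zero_iff hms).2 (hκT x)
    have hae : ∀ᵐ y ∂κ x, T y = x := by
      rw [ae_iff]
      exact hnull
    have hcongr : ∀ᵐ y ∂κ x, A.indicator (fun y => f (T y)) y = f x * A.indicator 1 y := by
      filter_upwards [hae] with y hy
      by_cases hyA : y ∈ A
      · simp [Set.indicator_of_mem hyA, hy]
      · simp [Set.indicator_of_notMem hyA]
    rw [lintegral_congr_ae hcongr, lintegral_const_mul _ (measurable_one.indicator hA),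
      lintegral_indicator_one hA]
  calc (α.bind fun x => κ x) A = ∫⁻ x, κ x A ∂α := Measure.bind_apply hA κ.measurable.aemeasurable
    _ = ∫⁻ x, f x * κ x A ∂β := by
        conv_lhs => rw [hαd]
        rw [lintegral_withDensity_eq_lintegral_mul β hf (κ.measurable_coe hA)]
        rfl
    _ = ∫⁻ x, ∫⁻ y, A.indicator (fun y => f (T y)) y ∂κ x ∂β :=
        (lintegral_congr fun x => (key x).symm)
    _ = ∫⁻ y, A.indicator (fun y => f (T y)) y ∂(β.bind fun x => κ x) :=
        (Measure.lintegral_bind κ.measurable.aemeasurable ((hf.comp hT).indicator hA).aemeasurable).symm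
    _ = ((β.bind fun x => κ x).withDensity fun y => f (T y)) A := by
        rw [withDensity_apply _ hA, ← lintegral_indicator hA]

end aux

theorem relEntropy_bind_eq {E F : Type*} [MeasurableSpace E] [MeasurableSpace F]
    [StandardBorelSpace E] [StandardBorelSpace F]
    (κ : Kernel E F) [IsMarkovKernel κ]
    (T : F → E) (hT : Measurable T)
    (hκT : ∀ x : E, κ x {y : F | T y = x} = 1)
    (α β : Measure E) [IsProbabilityMeasure α] [IsProbabilityMeasure β] :
    relEntropy (α.bind fun x => κ x) (β.bind fun x => κ x) = relEntropy α β := by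
  haveI hpa : IsProbabilityMeasure (α.bind fun x => κ x) := by
    constructor
    rw [Measure.bind_apply MeasurableSet.univ κ.measurable.aemeasurable]
    simp
  haveI hpb : IsProbabilityMeasure (β.bind fun x => κ x) := by
    constructor
    rw [Measure.bind_apply MeasurableSet.univ κ.measurable.aemeasurable]
    simp
  have hmap_a := map_bind_eq κ T hT hκT α
  have hmap_b := map_bind_eq κ T hT hκT β
  have hac_iff : (α.bind fun x => κ x) ≪ (β.bind fun x => κ x) ↔ α ≪ β := by
    constructor
    · intro h
      rw [← hmap_a, ← hmap_b]
      exact h.map hT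
    · intro h
      rw [bind_eq_withDensity κ T hT hκT α β h]
      exact withDensity_absolutelyContinuous _ _
  by_cases hab : α ≪ β
  · have hbind := bind_eq_withDensity κ T hT hκT α β hab
    have hacb : (α.bind fun x => κ x) ≪ (β.bind fun x => κ x) := hac_iff.2 hab
    have hf : Measurable (α.rnDeriv β) := Measure.measurable_rnDeriv α β
    have hrn : (α.bind fun x => κ x).rnDeriv (β.bind fun x => κ x)
        =ᵐ[β.bind fun x => κ x] fun y => α.rnDeriv β (T y) := by
      rw [hbind]
      exact Measure.rnDeriv_withDensity _ (hf.comp hT)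
    have hrn' : (α.bind fun x => κ x).rnDeriv (β.bind fun x => κ x)
        =ᵐ[α.bind fun x => κ x] fun y => α.rnDeriv β (T y) := hacb.ae_le hrn
    have hllr : llr (α.bind fun x => κ x) (β.bind fun x => κ x)
        =ᵐ[α.bind fun x => κ x] fun y => llr α β (T y) := by
      filter_upwards [hrn'] with y hy
      simp only [llr, hy]
    have hint_iff : Integrable (llr (α.bind fun x => κ x) (β.bind fun x => κ x))
        (α.bind fun x => κ x) ↔ Integrable (llr α β) α := by
      rw [integrable_congr hllr]
      have h2 := integrable_map_measure (f := T) (g := llr α β)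
        (μ := α.bind fun x => κ x)
        ((measurable_llr α β).aestronglyMeasurable) hT.aemeasurable
      rw [hmap_a] at h2
      rw [h2]; rfl
    have hint_eq : (∫ y, llr (α.bind fun x => κ x) (β.bind fun x => κ x) y
        ∂(α.bind fun x => κ x)) = ∫ x, llr α β x ∂α := by
      rw [integral_congr_ae hllr]
      have h3 := integral_map (φ := T) (μ := α.bind fun x => κ x)
        hT.aemeasurable (f := llr α β) ((measurable_llr α β).aestronglyMeasurable)
      rw [hmap_a] at h3
      exact h3.symm
    unfold relEntropy
    by_cases hI : Integrable (llr α β) α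
    · rw [if_pos ⟨hacb, hint_iff.2 hI⟩, if_pos ⟨hab, hI⟩, hint_eq]
    · rw [if_neg (fun h => hI (hint_iff.1 h.2)), if_neg (fun h => hI h.2)]
  · unfold relEntropy
    rw [if_neg (fun h => hab (hac_iff.1 h.1)), if_neg (fun h => hab h.1)]
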